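/- Let F be a nonempty monotone increasing family of subsets of [n]. For 0 < p < 1 define μ_p(F) = Σ_{X ∈ F} p^{|X|}(1−p)^{n−|X|}. Then the function p ↦ log_p μ_p(F) is non-increasing in p on (0,1). -/

import Mathlib

open Finset

/-- The `p`-biased measure of a family `F` of subsets of `[n]`:
`μ_p(F) = Σ_{X ∈ F} p^{|X|} (1-p)^{n-|X|}`. -/
noncomputable def biasedMeasure (n : ℕ) (p : ℝ) (F : Finset (Finset (Fin n))) : ℝ :=
  ∑ X ∈ F, p ^ X.card * (1 - p) ^ (n - X.card)

/-- Minkowski-type inequality: the analytic core. -/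
lemma minkowski_aux {m p σ : ℝ} (hm : 1 ≤ m) (hp0 : 0 ≤ p) (hp1 : p ≤ 1)
    (hσ0 : 0 ≤ σ) (hσ1 : σ ≤ 1) :
    ((1 - p) * σ ^ m + p) ^ (1 / m) ≤ (1 - p ^ (1 / m)) * σ + p ^ (1 / m) := by
  have hm0 : (0 : ℝ) < m := lt_of_lt_of_le one_pos hm
  have hminv : 1 / m * m = 1 := by field_simp
  have hr : ∀ x : ℝ, 0 ≤ x → (x ^ (1 / m)) ^ m = x := by
    intro x hx
    rw [← Real.rpow_mul hx, hminv, Real.rpow_one]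
  have hr' : ∀ x : ℝ, 0 ≤ x → (x ^ m) ^ (1 / m) = x := by
    intro x hx
    rw [← Real.rpow_mul hx, mul_one_div, div_self hm0.ne', Real.rpow_one]
  set Q : ℝ := p ^ (1 / m) with hQ
  have hq0 : 0 ≤ Q := Real.rpow_nonneg hp0 _
  have h1p : (0 : ℝ) ≤ 1 - p := by linarith
  have h1σ : (0 : ℝ) ≤ 1 - σ := by linarith
  set f : Fin 2 → ℝ := ![σ * (1 - p) ^ (1 / m), σ * Q] with hf
  set g : Fin 2 → ℝ := ![0, (1 - σ) * Q] with hg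
  have hfn : ∀ i ∈ (Finset.univ : Finset (Fin 2)), 0 ≤ f i := by
    intro i _
    fin_cases i <;> simp [hf] <;> positivity
  have hgn : ∀ i ∈ (Finset.univ : Finset (Fin 2)), 0 ≤ g i := by
    intro i _
    fin_cases i <;> simp [hg] <;> positivity
  have key := Real.Lp_add_le_of_nonneg (s := (Finset.univ : Finset (Fin 2))) (f := f) (g := g) hm hfn hgn
  rw [Fin.sum_univ_two, Fin.sum_univ_two, Fin.sum_univ_two] at key
  simp only [hf, hg, Matrix.cons_val_zero, Matrix.cons_val_one, Matrix.head_cons] at key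
  have e1 : σ * (1 - p) ^ (1 / m) + 0 = σ * (1 - p) ^ (1 / m) := by ring
  have e2 : σ * Q + (1 - σ) * Q = Q := by ring
  rw [e1, e2] at key
  have c1 : (σ * (1 - p) ^ (1 / m)) ^ m = σ ^ m * (1 - p) := by
    rw [Real.mul_rpow hσ0 (Real.rpow_nonneg h1p _), hr _ h1p]
  have c2 : Q ^ m = p := hr _ hp0
  have c3 : (σ * Q) ^ m = σ ^ m * p := by
    rw [Real.mul_rpow hσ0 hq0, hQ, hr _ hp0]
  have c4 : ((1 - σ) * Q) ^ m = (1 - σ) ^ m * p := by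
    rw [Real.mul_rpow h1σ hq0, hQ, hr _ hp0]
  have c5 : (0 : ℝ) ^ m = 0 := Real.zero_rpow hm0.ne'
  rw [c1, c2, c3, c4, c5] at key
  have c6 : (σ ^ m * (1 - p) + σ ^ m * p) ^ (1 / m) = σ := by
    have : σ ^ m * (1 - p) + σ ^ m * p = σ ^ m := by ring
    rw [this, hr' _ hσ0]
  have c7 : ((0 : ℝ) + (1 - σ) ^ m * p) ^ (1 / m) = (1 - σ) * Q := by
    rw [zero_add, Real.mul_rpow (Real.rpow_nonneg h1σ _) hp0, hr' _ h1σ]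
  rw [c6, c7] at key
  calc ((1 - p) * σ ^ m + p) ^ (1 / m)
      = (σ ^ m * (1 - p) + p) ^ (1 / m) := by ring_nf
    _ ≤ σ + (1 - σ) * Q := key
    _ = (1 - Q) * σ + Q := by ring

lemma rpow_log_div_log {p q : ℝ} (hp0 : 0 < p) (hp1 : p < 1) (hq0 : 0 < q) :
    p ^ (Real.log q / Real.log p) = q := by
  have hlp : Real.log p ≠ 0 := (Real.log_neg hp0 hp1).ne
  rw [Real.rpow_def_of_pos hp0]
  rw [mul_div_assoc']
  rw [mul_comm]
  rw [mul_div_assoc, div_self hlp, mul_one, Real.exp_log hq0]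

/-- The two-point mixing inequality. -/
lemma combine_aux {p q : ℝ} (hp0 : 0 < p) (hq1 : q < 1) (hpq : p ≤ q) {a b : ℝ}
    (ha : 0 ≤ a) (hab : a ≤ b) :
    ((1 - p) * a + p * b) ^ (Real.log q / Real.log p)
      ≤ (1 - q) * a ^ (Real.log q / Real.log p) + q * b ^ (Real.log q / Real.log p) := by
  have hp1 : p < 1 := lt_of_le_of_lt hpq hq1
  have hq0 : 0 < q := lt_of_lt_of_le hp0 hpq
  have hlp : Real.log p < 0 := Real.log_neg hp0 hp1
  have hlq : Real.log q < 0 := Real.log_neg hq0 hq1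
  set L : ℝ := Real.log q / Real.log p with hL
  have hL0 : 0 < L := div_pos_iff.2 (Or.inr ⟨hlq, hlp⟩)
  have hL1 : L ≤ 1 := by
    rw [hL, div_le_one_iff]
    right; right
    exact ⟨hlp, Real.log_le_log hp0 hpq⟩
  have hpL : p ^ L = q := rpow_log_div_log hp0 hp1 hq0
  rcases eq_or_lt_of_le (le_trans ha hab) with hb0 | hb0
  · -- b = 0, hence a = 0
    have hb : b = 0 := hb0.symm
    have ha' : a = 0 := le_antisymm (hb ▸ hab) ha
    rw [ha', hb]
    simp [Real.zero_rpow hL0.ne']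
  · -- b > 0
    set t : ℝ := a / b with ht
    have ht0 : 0 ≤ t := div_nonneg ha hb0.le
    have ht1 : t ≤ 1 := (div_le_one hb0).2 hab
    have hat : a = b * t := by rw [ht, mul_div_assoc', eq_div_iff hb0.ne', mul_comm]
    set σ : ℝ := t ^ L with hσ
    have hσ0 : 0 ≤ σ := Real.rpow_nonneg ht0 _
    have hσ1 : σ ≤ 1 := Real.rpow_le_one ht0 ht1 hL0.le
    have hm : (1 : ℝ) ≤ L⁻¹ := one_le_inv_iff₀.2 ⟨hL0, hL1⟩
    have h1L : 1 / L⁻¹ = L := by field_simp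
    have hσm : σ ^ L⁻¹ = t := by
      rw [hσ, ← Real.rpow_mul ht0, mul_inv_cancel₀ hL0.ne', Real.rpow_one]
    have hmain := minkowski_aux hm hp0.le hp1.le hσ0 hσ1
    rw [h1L, hσm, hpL] at hmain
    -- hmain : ((1-p) * t + p) ^ L ≤ (1 - q) * σ + q
    have hX0 : 0 ≤ (1 - p) * t + p := by nlinarith
    have hbl : (0 : ℝ) ≤ b ^ L := Real.rpow_nonneg hb0.le _
    calc ((1 - p) * a + p * b) ^ L
        = (b * ((1 - p) * t + p)) ^ L := by rw [hat]; ring_nf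
      _ = b ^ L * ((1 - p) * t + p) ^ L := Real.mul_rpow hb0.le hX0
      _ ≤ b ^ L * ((1 - q) * σ + q) := by
          exact mul_le_mul_of_nonneg_left hmain hbl
      _ = (1 - q) * (b ^ L * t ^ L) + q * b ^ L := by rw [hσ]; ring
      _ = (1 - q) * a ^ L + q * b ^ L := by
          rw [← Real.mul_rpow hb0.le ht0, ← hat]

/-- Main induction over the ground set. -/
lemma key_induction {n : ℕ} {p q : ℝ} (hp0 : 0 < p) (hq1 : q < 1) (hpq : p ≤ q)
    (s : Finset (Fin n)) :
    ∀ F : Finset (Finset (Fin n)), F.Nonempty → (∀ X ∈ F, X ⊆ s) →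
      (∀ X ∈ F, ∀ Y, Y ⊆ s → X ⊆ Y → Y ∈ F) →
      (∑ X ∈ F, p ^ X.card * (1 - p) ^ (s.card - X.card)) ^ (Real.log q / Real.log p)
        ≤ ∑ X ∈ F, q ^ X.card * (1 - q) ^ (s.card - X.card) := by
  classical
  have hp1 : p < 1 := lt_of_le_of_lt hpq hq1
  have hq0 : 0 < q := lt_of_lt_of_le hp0 hpq
  induction s using Finset.induction_on with
  | empty =>
    intro F hne hsub _
    have hFe : F = {∅} := by
      apply Finset.eq_singleton_iff_unique_mem.2
      obtain ⟨X, hX⟩ := hne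
      have hXe : X = ∅ := Finset.subset_empty.1 (hsub X hX)
      exact ⟨hXe ▸ hX, fun Y hY => Finset.subset_empty.1 (hsub Y hY)⟩
    rw [hFe]
    simp [Real.one_rpow]
  | @insert i s₀ hi ih =>
    intro F hne hsub hmono
    set L : ℝ := Real.log q / Real.log p with hLdef
    set F₀ : Finset (Finset (Fin n)) := F.filter (fun X => i ∉ X) with hF₀
    set F₁ : Finset (Finset (Fin n)) := (F.filter (fun X => i ∈ X)).image (fun X => X.erase i)
      with hF₁
    have hcard : (insert i s₀).card = s₀.card + 1 := Finset.card_insert_of_notMem hi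
    -- splitting of the sum
    have split : ∀ r : ℝ,
        (∑ X ∈ F, r ^ X.card * (1 - r) ^ ((insert i s₀).card - X.card))
          = (1 - r) * (∑ X ∈ F₀, r ^ X.card * (1 - r) ^ (s₀.card - X.card))
            + r * (∑ Y ∈ F₁, r ^ Y.card * (1 - r) ^ (s₀.card - Y.card)) := by
      intro r
      rw [← Finset.sum_filter_add_sum_filter_not F (fun X => i ∉ X)]
      congr 1
      · -- the i ∉ X part
        rw [Finset.mul_sum]
        apply Finset.sum_congr rfl
        intro X hX
        obtain ⟨hXF, hiX⟩ := Finset.mem_filter.1 hX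
        have hXs : X ⊆ s₀ := by
          intro x hx
          rcases Finset.mem_insert.1 (hsub X hXF hx) with h | h
          · exact absurd (h ▸ hx) hiX
          · exact h
        have hle : X.card ≤ s₀.card := Finset.card_le_card hXs
        have hexp : (insert i s₀).card - X.card = (s₀.card - X.card) + 1 := by
          rw [hcard]; omega
        rw [hexp, pow_succ]
        ring
      · -- the i ∈ X part
        have hinj : ∀ x ∈ F.filter (fun X => ¬ i ∉ X), ∀ y ∈ F.filter (fun X => ¬ i ∉ X),
            x.erase i = y.erase i → x = y := by
          intro x hx y hy hxy
          have hix : i ∈ x := not_not.1 (Finset.mem_filter.1 hx).2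
          have hiy : i ∈ y := not_not.1 (Finset.mem_filter.1 hy).2
          rw [← Finset.insert_erase hix, ← Finset.insert_erase hiy, hxy]
        have himg : F₁ = (F.filter (fun X => ¬ i ∉ X)).image (fun X => X.erase i) := by
          rw [hF₁]
          congr 1
          apply Finset.filter_congr
          intro X _
          simp
        rw [himg, Finset.sum_image hinj, Finset.mul_sum]
        apply Finset.sum_congr rfl
        intro Z hZ
        have hiZ : i ∈ Z := not_not.1 (Finset.mem_filter.1 hZ).2
        have hZ1 : 1 ≤ Z.card := Finset.card_pos.2 ⟨i, hiZ⟩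
        have hce : (Z.erase i).card = Z.card - 1 := Finset.card_erase_of_mem hiZ
        obtain ⟨k, hk⟩ : ∃ k, Z.card = k + 1 := ⟨Z.card - 1, by omega⟩
        have hexp2 : (insert i s₀).card - Z.card = s₀.card - k := by
          rw [hcard, hk]; omega
        rw [hexp2, hce, hk]
        have hk1 : k + 1 - 1 = k := by omega
        rw [hk1, pow_succ]
        ring
    -- properties of F₀ and F₁
    have hsub₁ : ∀ Y ∈ F₁, Y ⊆ s₀ := by
      intro Y hY
      obtain ⟨Z, hZ, rfl⟩ := Finset.mem_image.1 hY
      have hZF : Z ∈ F := (Finset.mem_filter.1 hZ).1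
      have : Z.erase i ⊆ (insert i s₀).erase i := Finset.erase_subset_erase i (hsub Z hZF)
      rwa [Finset.erase_insert hi] at this
    have hmono₁ : ∀ X ∈ F₁, ∀ Y, Y ⊆ s₀ → X ⊆ Y → Y ∈ F₁ := by
      intro X hX Y hYs hXY
      obtain ⟨Z, hZ, rfl⟩ := Finset.mem_image.1 hX
      obtain ⟨hZF, hiZ'⟩ := Finset.mem_filter.1 hZ
      have hiZ : i ∈ Z := hiZ'
      have hiY : i ∉ Y := fun h => hi (hYs h)
      have hins : insert i Y ∈ F := by
        apply hmono Z hZF (insert i Y) (Finset.insert_subset_insert i hYs)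
        calc Z = insert i (Z.erase i) := (Finset.insert_erase hiZ).symm
          _ ⊆ insert i Y := Finset.insert_subset_insert i hXY
      apply Finset.mem_image.2
      refine ⟨insert i Y, Finset.mem_filter.2 ⟨hins, Finset.mem_insert_self i Y⟩, ?_⟩
      exact Finset.erase_insert hiY
    have hne₁ : F₁.Nonempty := by
      obtain ⟨X₀, hX₀⟩ := hne
      have hfull : insert i s₀ ∈ F :=
        hmono X₀ hX₀ (insert i s₀) (Finset.Subset.refl _) (hsub X₀ hX₀)
      exact ⟨s₀, Finset.mem_image.2 ⟨insert i s₀,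
        Finset.mem_filter.2 ⟨hfull, Finset.mem_insert_self i s₀⟩, Finset.erase_insert hi⟩⟩
    have hss : F₀ ⊆ F₁ := by
      intro X hX
      obtain ⟨hXF, hiX⟩ := Finset.mem_filter.1 hX
      have hXs : X ⊆ s₀ := by
        intro x hx
        rcases Finset.mem_insert.1 (hsub X hXF hx) with h | h
        · exact absurd (h ▸ hx) hiX
        · exact h
      have hins : insert i X ∈ F :=
        hmono X hXF (insert i X) (Finset.insert_subset_insert i hXs)
          (Finset.subset_insert i X)
      exact Finset.mem_image.2 ⟨insert i X,
        Finset.mem_filter.2 ⟨hins, Finset.mem_insert_self i X⟩, Finset.erase_insert hiX⟩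
    have hsub₀ : ∀ X ∈ F₀, X ⊆ s₀ := by
      intro X hX
      obtain ⟨hXF, hiX⟩ := Finset.mem_filter.1 hX
      intro x hx
      rcases Finset.mem_insert.1 (hsub X hXF hx) with h | h
      · exact absurd (h ▸ hx) hiX
      · exact h
    have hmono₀ : ∀ X ∈ F₀, ∀ Y, Y ⊆ s₀ → X ⊆ Y → Y ∈ F₀ := by
      intro X hX Y hYs hXY
      obtain ⟨hXF, _⟩ := Finset.mem_filter.1 hX
      refine Finset.mem_filter.2 ⟨hmono X hXF Y (hYs.trans (Finset.subset_insert i s₀)) hXY,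
        fun h => hi (hYs h)⟩
    -- the four quantities
    set a : ℝ := ∑ X ∈ F₀, p ^ X.card * (1 - p) ^ (s₀.card - X.card) with hadef
    set b : ℝ := ∑ X ∈ F₁, p ^ X.card * (1 - p) ^ (s₀.card - X.card) with hbdef
    set A : ℝ := ∑ X ∈ F₀, q ^ X.card * (1 - q) ^ (s₀.card - X.card) with hAdef
    set B : ℝ := ∑ X ∈ F₁, q ^ X.card * (1 - q) ^ (s₀.card - X.card) with hBdef
    have hterm : ∀ X : Finset (Fin n), 0 ≤ p ^ X.card * (1 - p) ^ (s₀.card - X.card) := by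
      intro X
      have : (0:ℝ) ≤ 1 - p := by linarith
      positivity
    have ha0 : 0 ≤ a := Finset.sum_nonneg (fun X _ => hterm X)
    have hab : a ≤ b := Finset.sum_le_sum_of_subset_of_nonneg hss (fun X hX _ => hterm X)
    have hbB : b ^ L ≤ B := ih F₁ hne₁ hsub₁ hmono₁
    have haA : a ^ L ≤ A := by
      rcases F₀.eq_empty_or_nonempty with h | h
      · have hL0 : 0 < L := by
          rw [hLdef]
          exact div_pos_iff.2 (Or.inr ⟨Real.log_neg hq0 hq1, Real.log_neg hp0 hp1⟩)
        rw [hadef, hAdef, h]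
        simp [Real.zero_rpow hL0.ne']
      · exact ih F₀ h hsub₀ hmono₀
    rw [split p, split q, ← hadef, ← hbdef, ← hAdef, ← hBdef]
    calc ((1 - p) * a + p * b) ^ L
        ≤ (1 - q) * a ^ L + q * b ^ L := combine_aux hp0 hq1 hpq ha0 hab
      _ ≤ (1 - q) * A + q * B := by
          have h1q : (0:ℝ) ≤ 1 - q := by linarith
          have hq0' : (0:ℝ) ≤ q := hq0.le
          exact add_le_add (mul_le_mul_of_nonneg_left haA h1q)
            (mul_le_mul_of_nonneg_left hbB hq0')

/-- For a nonempty monotone increasing family `F ⊆ 2^{[n]}`, the function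
`p ↦ log_p μ_p(F)` is non-increasing on `(0, 1)`. -/
theorem logp_biasedMeasure_antitone {n : ℕ} (F : Finset (Finset (Fin n)))
    (hne : F.Nonempty) (hmono : ∀ X ∈ F, ∀ Y : Finset (Fin n), X ⊆ Y → Y ∈ F)
    (p q : ℝ) (hp : 0 < p) (hpq : p ≤ q) (hq : q < 1) :
    Real.log (biasedMeasure n q F) / Real.log q ≤
      Real.log (biasedMeasure n p F) / Real.log p := by
  have hp1 : p < 1 := lt_of_le_of_lt hpq hq
  have hq0 : 0 < q := lt_of_lt_of_le hp hpq
  have hlp : Real.log p < 0 := Real.log_neg hp hp1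
  have hlq : Real.log q < 0 := Real.log_neg hq0 hq
  have hucard : (Finset.univ : Finset (Fin n)).card = n := by simp
  have hkey := key_induction hp hq hpq (Finset.univ : Finset (Fin n)) F hne
    (fun X _ => Finset.subset_univ X) (fun X hX Y _ hXY => hmono X hX Y hXY)
  rw [hucard] at hkey
  have hkey' : (biasedMeasure n p F) ^ (Real.log q / Real.log p) ≤ biasedMeasure n q F := hkey
  have hμp : 0 < biasedMeasure n p F := by
    obtain ⟨X, hX⟩ := hne
    apply Finset.sum_pos'
    · intro Y _
      have : (0:ℝ) ≤ 1 - p := by linarith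
      positivity
    · refine ⟨X, hX, ?_⟩
      have : (0:ℝ) < 1 - p := by linarith
      positivity
  have hlog : Real.log q / Real.log p * Real.log (biasedMeasure n p F)
      ≤ Real.log (biasedMeasure n q F) := by
    have := Real.log_le_log (Real.rpow_pos_of_pos hμp _) hkey'
    rwa [Real.log_rpow hμp] at this
  have h1 : Real.log (biasedMeasure n q F) / Real.log q
      ≤ (Real.log q / Real.log p * Real.log (biasedMeasure n p F)) / Real.log q := by
    rw [div_le_div_right_of_neg hlq]
    exact hlog
  have h2 : (Real.log q / Real.log p * Real.log (biasedMeasure n p F)) / Real.log q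
      = Real.log (biasedMeasure n p F) / Real.log p := by
    rw [show Real.log q / Real.log p * Real.log (biasedMeasure n p F)
        = Real.log q * (Real.log (biasedMeasure n p F) / Real.log p) by ring]
    exact mul_div_cancel_left₀ _ hlq.ne
  linarith [h1, h2.symm.le, h2.le]
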